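/- For a continuous linear automorphism T of a Banach space B, T has the shadowing property if and only if the induced operator T_∞ on ℓ^∞(ℤ, B), defined by (T_∞((x_k)))_n = x_{n+1} − T x_n, is surjective. -/

import Mathlib

/-- Shadowing property for a continuous linear automorphism. -/
def Shadowing {X : Type*} [SeminormedAddCommGroup X] [Module ℝ X] (T : X ≃L[ℝ] X) : Prop :=
  ∀ ε > (0 : ℝ), ∃ δ > (0 : ℝ), ∀ x : ℤ → X,
    (∀ n : ℤ, ‖x (n + 1) - T (x n)‖ < δ) →
    ∃ y : X, ∀ n : ℤ, ‖x n - (T ^ n) y‖ < ε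

/-- The space of bounded `B`-valued bisequences. -/
def BddSeq (B : Type*) [NormedAddCommGroup B] : Type _ :=
  {x : ℤ → B // ∃ C : ℝ, ∀ n : ℤ, ‖x n‖ ≤ C}

/-- The operator `T_∞` on bounded bisequences, `(T_∞ x)_n = x_{n+1} - T x_n`. -/
def Tinf {B : Type*} [NormedAddCommGroup B] [NormedSpace ℝ B] (T : B ≃L[ℝ] B)
    (x : BddSeq B) : BddSeq B :=
  ⟨fun n => x.1 (n + 1) - T (x.1 n), by
    obtain ⟨C, hC⟩ := x.2
    refine ⟨C + ‖(T : B →L[ℝ] B)‖ * C, fun n => ?_⟩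
    calc ‖x.1 (n + 1) - T (x.1 n)‖ ≤ ‖x.1 (n + 1)‖ + ‖T (x.1 n)‖ := norm_sub_le _ _
      _ ≤ C + ‖(T : B →L[ℝ] B)‖ * C := by
          refine add_le_add (hC _) ?_
          exact le_trans ((T : B →L[ℝ] B).le_opNorm _)
            (mul_le_mul_of_nonneg_left (hC _) (norm_nonneg _))⟩

open BoundedContinuousFunction

section Aux

variable {B : Type*} [NormedAddCommGroup B] [NormedSpace ℝ B]

lemma zpow_succ_apply' (T : B ≃L[ℝ] B) (n : ℤ) (y : B) :
    (T ^ (n + 1)) y = T ((T ^ n) y) := by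
  rw [add_comm, zpow_one_add]; rfl

lemma zpow_pred_apply' (T : B ≃L[ℝ] B) (n : ℤ) (y : B) :
    (T ^ (n - 1)) y = T.symm ((T ^ n) y) := by
  have : T ^ n = T * T ^ (n - 1) := by rw [← zpow_one_add, add_sub_cancel]
  rw [this]
  exact (T.symm_apply_apply _).symm

lemma orbit_eq (T : B ≃L[ℝ] B) (w : ℤ → B) (h : ∀ n : ℤ, w (n + 1) = T (w n)) :
    ∀ n : ℤ, w n = (T ^ n) (w 0) := by
  intro n
  induction n using Int.induction_on with
  | zero => rfl
  | succ k ih => rw [h k, ih, zpow_succ_apply']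
  | pred k ih =>
      have h' := h (-(k : ℤ) - 1)
      rw [sub_add_cancel] at h'
      have : w (-(k : ℤ) - 1) = T.symm (w (-(k : ℤ))) := by
        rw [h', T.symm_apply_apply]
      rw [this, ih, zpow_pred_apply']

/-- Forward solution of the recursion `x (k+1) = T (x k) + g k`, nonnegative indices. -/
private def xpos (T : B ≃L[ℝ] B) (g : ℤ → B) : ℕ → B
  | 0 => 0
  | k + 1 => T (xpos T g k) + g k

/-- Backward solution: `xneg T g k = x (-k)`. -/
private def xneg (T : B ≃L[ℝ] B) (g : ℤ → B) : ℕ → B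
  | 0 => 0
  | k + 1 => T.symm (xneg T g k - g (-(k + 1)))

/-- A (possibly unbounded) exact solution of `x (n+1) - T (x n) = g n`. -/
private def sol (T : B ≃L[ℝ] B) (g : ℤ → B) : ℤ → B
  | Int.ofNat k => xpos T g k
  | Int.negSucc k => xneg T g (k + 1)

private lemma sol_spec (T : B ≃L[ℝ] B) (g : ℤ → B) :
    ∀ n : ℤ, sol T g (n + 1) - T (sol T g n) = g n := by
  intro n
  cases n with
  | ofNat k =>
      have h1 : (Int.ofNat k) + 1 = Int.ofNat (k + 1) := rfl
      rw [h1]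
      show xpos T g (k + 1) - T (xpos T g k) = g (Int.ofNat k)
      rw [xpos]
      simp
  | negSucc k =>
      cases k with
      | zero =>
          have h1 : (Int.negSucc 0) + 1 = Int.ofNat 0 := rfl
          rw [h1]
          show xpos T g 0 - T (xneg T g 1) = g (Int.negSucc 0)
          rw [xpos, xneg, xneg]
          rw [T.apply_symm_apply]
          simp
      | succ j =>
          have h1 : (Int.negSucc (j + 1)) + 1 = Int.negSucc j := rfl
          rw [h1]
          show xneg T g (j + 1) - T (xneg T g (j + 2)) = g (Int.negSucc (j + 1))
          rw [show xneg T g (j + 2) = T.symm (xneg T g (j + 1) - g (-((j:ℤ) + 1 + 1))) from rfl]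
          rw [T.apply_symm_apply]
          have h2 : (Int.negSucc (j + 1)) = -((j : ℤ) + 1 + 1) := by
            rw [Int.negSucc_eq]; push_cast; ring
          rw [h2]
          abel

private lemma bound1 (T : B ≃L[ℝ] B) (f : ℤ →ᵇ B) (n : ℤ) :
    ‖f (n + 1) - T (f n)‖ ≤ (1 + ‖(T : B →L[ℝ] B)‖) * ‖f‖ := by
  calc ‖f (n + 1) - T (f n)‖ ≤ ‖f (n + 1)‖ + ‖T (f n)‖ := norm_sub_le _ _
    _ ≤ ‖f‖ + ‖(T : B →L[ℝ] B)‖ * ‖f‖ := by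
        refine add_le_add (f.norm_coe_le_norm _) ?_
        exact le_trans ((T : B →L[ℝ] B).le_opNorm _)
          (mul_le_mul_of_nonneg_left (f.norm_coe_le_norm _) (norm_nonneg _))
    _ = (1 + ‖(T : B →L[ℝ] B)‖) * ‖f‖ := by ring

/-- The operator `f ↦ (n ↦ f (n+1) - T (f n))` on `ℤ →ᵇ B`. -/
private noncomputable def shiftSub (T : B ≃L[ℝ] B) : (ℤ →ᵇ B) →L[ℝ] (ℤ →ᵇ B) :=
  LinearMap.mkContinuous
    { toFun := fun f => ofNormedAddCommGroupDiscrete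
        (fun n => f (n + 1) - T (f n)) ((1 + ‖(T : B →L[ℝ] B)‖) * ‖f‖) (bound1 T f)
      map_add' := by
        intro f g
        ext n
        simp [coe_ofNormedAddCommGroupDiscrete]
        abel
      map_smul' := by
        intro c f
        ext n
        simp [coe_ofNormedAddCommGroupDiscrete, smul_sub] }
    (1 + ‖(T : B →L[ℝ] B)‖)
    (fun f => (norm_le (by positivity)).2 (bound1 T f))

private lemma shiftSub_apply (T : B ≃L[ℝ] B) (f : ℤ →ᵇ B) (n : ℤ) :
    shiftSub T f n = f (n + 1) - T (f n) := rfl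

end Aux

/-- `T` has the shadowing property iff `T_∞` is surjective. -/
theorem stmt3 {B : Type*} [NormedAddCommGroup B] [NormedSpace ℝ B] [CompleteSpace B]
    (T : B ≃L[ℝ] B) :
    Shadowing T ↔ Function.Surjective (Tinf T) := by
  constructor
  · -- Shadowing → Surjective
    intro hS z
    obtain ⟨C, hC⟩ := z.2
    have hC0 : (0 : ℝ) ≤ C := le_trans (norm_nonneg _) (hC 0)
    obtain ⟨δ, hδ, hsh⟩ := hS 1 one_pos
    set c : ℝ := δ / (2 * (C + 1)) with hc
    have hcpos : 0 < c := by positivity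
    -- the scaled defect
    set g : ℤ → B := fun n => c • z.1 n with hg
    have hgsmall : ∀ n : ℤ, ‖g n‖ < δ := by
      intro n
      have : ‖g n‖ = c * ‖z.1 n‖ := by
        rw [hg]; simp [norm_smul, abs_of_pos hcpos]
      rw [this]
      calc c * ‖z.1 n‖ ≤ c * C := by
            exact mul_le_mul_of_nonneg_left (hC n) (le_of_lt hcpos)
        _ ≤ δ / 2 := by
            rw [hc]
            rw [div_mul_eq_mul_div, div_le_div_iff₀ (by positivity) two_pos]
            nlinarith
        _ < δ := by linarith
    -- the exact (possibly unbounded) solution is a δ-pseudo-orbit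
    obtain ⟨y, hy⟩ := hsh (sol T g) (by
      intro n
      rw [sol_spec T g n]
      exact hgsmall n)
    -- the bounded preimage
    refine ⟨⟨fun n => c⁻¹ • (sol T g n - (T ^ n) y), ⟨c⁻¹ * 1, fun n => ?_⟩⟩, ?_⟩
    · rw [norm_smul, norm_inv, Real.norm_eq_abs, abs_of_pos hcpos]
      exact mul_le_mul_of_nonneg_left (le_of_lt (hy n)) (by positivity)
    · apply Subtype.ext
      funext n
      show c⁻¹ • (sol T g (n + 1) - (T ^ (n + 1)) y)
          - T (c⁻¹ • (sol T g n - (T ^ n) y)) = z.1 n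
      rw [map_smul, map_sub, ← smul_sub, zpow_succ_apply']
      have : sol T g (n + 1) - (T ^ (n + 1)) y - (T (sol T g n) - T ((T ^ n) y))
          = sol T g (n + 1) - T (sol T g n) := by
        rw [zpow_succ_apply']; abel
      rw [zpow_succ_apply'] at this
      rw [this, sol_spec T g n, hg]
      rw [smul_smul, inv_mul_cancel₀ (ne_of_gt hcpos), one_smul]
  · -- Surjective → Shadowing
    intro hsurj
    -- surjectivity of the operator on ℤ →ᵇ B
    have hSsurj : Function.Surjective (shiftSub T) := by
      intro gf
      obtain ⟨x, hx⟩ := hsurj ⟨fun n => gf n, ⟨‖gf‖, fun n => gf.norm_coe_le_norm n⟩⟩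
      obtain ⟨Cx, hCx⟩ := x.2
      refine ⟨BoundedContinuousFunction.ofNormedAddCommGroupDiscrete x.1 Cx hCx, ?_⟩
      ext n
      have := congrArg (fun u : BddSeq B => u.1 n) hx
      simpa [shiftSub_apply, Tinf, BoundedContinuousFunction.coe_ofNormedAddCommGroupDiscrete]
        using this
    obtain ⟨M, hM, hpre⟩ := (shiftSub T).exists_preimage_norm_le hSsurj
    intro ε hε
    refine ⟨ε / (2 * M), by positivity, ?_⟩
    intro x hx
    -- the defect of the pseudo-orbit, as a bounded sequence
    set g : ℤ →ᵇ B := BoundedContinuousFunction.ofNormedAddCommGroupDiscrete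
      (fun n => x (n + 1) - T (x n)) (ε / (2 * M)) (fun n => le_of_lt (hx n)) with hgdef
    have hgnorm : ‖g‖ ≤ ε / (2 * M) :=
      (norm_le (by positivity)).2 (fun n => le_of_lt (hx n))
    obtain ⟨f, hf, hfnorm⟩ := hpre g
    have hfε : ‖f‖ ≤ ε / 2 := by
      calc ‖f‖ ≤ M * ‖g‖ := hfnorm
        _ ≤ M * (ε / (2 * M)) := mul_le_mul_of_nonneg_left hgnorm (le_of_lt hM)
        _ = ε / 2 := by field_simp
    -- the orbit
    set w : ℤ → B := fun n => x n - f n with hw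
    have hworbit : ∀ n : ℤ, w (n + 1) = T (w n) := by
      intro n
      have h1 : f (n + 1) - T (f n) = x (n + 1) - T (x n) := by
        have := congrArg (fun u : ℤ →ᵇ B => u n) hf
        simpa [shiftSub_apply, hgdef,
          BoundedContinuousFunction.coe_ofNormedAddCommGroupDiscrete] using this
      rw [hw]
      simp only
      rw [map_sub]
      have h2 : x (n + 1) - f (n + 1) = T (x n) - T (f n) := by
        have e : x (n + 1) - f (n + 1) - (T (x n) - T (f n))
            = (x (n + 1) - T (x n)) - (f (n + 1) - T (f n)) := by abel
        have e0 : x (n + 1) - f (n + 1) - (T (x n) - T (f n)) = 0 := by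
          rw [e, h1, sub_self]
        exact sub_eq_zero.mp e0
      exact h2
    refine ⟨w 0, fun n => ?_⟩
    have : x n - (T ^ n) (w 0) = f n := by
      rw [← orbit_eq T w hworbit n, hw]
      simp
    rw [this]
    calc ‖f n‖ ≤ ‖f‖ := f.norm_coe_le_norm n
      _ ≤ ε / 2 := hfε
      _ < ε := by linarith
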